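/- arXiv:1208.5247 — 4 statements merged into one kernel-verified Lean document; each statement's English description precedes it below -/
import Mathlib

section
/- Let (M,d) be a finite metric space, Q ⊆ M a nonempty finite set with |Q| = n, and let a ∈ M minimize median(Q,·) where median(Q,x) := Σ_{q∈Q} d(q,x). Suppose y, ŷ ∈ M and an integer i satisfy median(Q,ŷ) > 3n·2^{i−1} and median(Q,y) ≤ 3n·2^i. If a' ∈ M satisfies d(a',a) ≤ 2^i, then d(a', y) ≤ 7·2^i. -/
/-- Lemma "a_is_near" of the simple 1-median algorithm. -/
theorem a_is_near {M : Type*} [MetricSpace M]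
    (Q : Finset M) (hQ : Q.Nonempty) (a : M)
    (hopt : ∀ x : M, ∑ q ∈ Q, dist q a ≤ ∑ q ∈ Q, dist q x)
    (y yhat : M) (i : ℤ)
    (hyhat : ∑ q ∈ Q, dist q yhat > 3 * (Q.card : ℝ) * 2 ^ (i - 1))
    (hy : ∑ q ∈ Q, dist q y ≤ 3 * (Q.card : ℝ) * 2 ^ i)
    (a' : M) (ha' : dist a' a ≤ 2 ^ i) :
    dist a' y ≤ 7 * 2 ^ i := by
  have hn : (0 : ℝ) < Q.card := by exact_mod_cast Finset.card_pos.mpr hQ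
  have key : (Q.card : ℝ) * dist a' y ≤ (Q.card : ℝ) * (7 * 2 ^ i) := by
    calc (Q.card : ℝ) * dist a' y = ∑ _q ∈ Q, dist a' y := by
          rw [Finset.sum_const, nsmul_eq_mul]
      _ ≤ ∑ q ∈ Q, (dist a' a + dist a q + dist q y) := by
          refine Finset.sum_le_sum fun q _ => ?_
          calc dist a' y ≤ dist a' q + dist q y := dist_triangle _ _ _
            _ ≤ (dist a' a + dist a q) + dist q y := by
                linarith [dist_triangle a' a q]
      _ = ∑ q ∈ Q, dist a' a + ∑ q ∈ Q, dist a q + ∑ q ∈ Q, dist q y := by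
          rw [← Finset.sum_add_distrib, ← Finset.sum_add_distrib]
      _ ≤ (Q.card : ℝ) * 2 ^ i + ∑ q ∈ Q, dist q y + ∑ q ∈ Q, dist q y := by
          have h1 : ∑ _q ∈ Q, dist a' a ≤ (Q.card : ℝ) * 2 ^ i := by
            rw [Finset.sum_const, nsmul_eq_mul]
            exact mul_le_mul_of_nonneg_left ha' hn.le
          have h2 : ∑ q ∈ Q, dist a q = ∑ q ∈ Q, dist q a :=
            Finset.sum_congr rfl fun q _ => dist_comm _ _
          have h3 := hopt y
          linarith
      _ ≤ (Q.card : ℝ) * 2 ^ i + 3 * (Q.card : ℝ) * 2 ^ i + 3 * (Q.card : ℝ) * 2 ^ i := by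
          linarith
      _ = (Q.card : ℝ) * (7 * 2 ^ i) := by ring
  exact le_of_mul_le_mul_left key hn
end

section
/- Let (M,d) be a finite metric space, Q ⊆ M nonempty finite, a ∈ M an optimal 1-center with value OPT = max_{q∈Q} d(a,q) and 2^i ≤ 4·OPT for an integer i. Let ε' > 0 and let R be a finite set such that every q ∈ Q has a representative r(q) ∈ R with d(q, r(q)) ≤ ε'·2^{i+1}. Suppose x̂ ∈ M and a_{ε'} ∈ M satisfy: max_{r∈R} d(x̂,r) ≤ max_{r∈R} d(a_{ε'},r), d(a, a_{ε'}) ≤ ε'·2^{i+1}, and every r ∈ R equals r(q) for some q ∈ Q. Then max_{q∈Q} d(x̂,q) ≤ OPT + 3·ε'·2^{i+1} ≤ (1 + 24·ε')·OPT. -/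
/-- Approximation guarantee of the accelerated 1-center refinement. -/
theorem one_center_refinement {M : Type*} [MetricSpace M]
    (Q : Finset M) (hQ : Q.Nonempty) (a : M)
    (hopt : ∀ x : M,
      Q.sup' hQ (fun q => dist a q) ≤ Q.sup' hQ (fun q => dist x q))
    (i : ℤ) (hi : (2 : ℝ) ^ i ≤ 4 * Q.sup' hQ (fun q => dist a q))
    (ε' : ℝ) (hε' : 0 < ε')
    (R : Finset M) (hR : R.Nonempty) (r : M → M)
    (hrep : ∀ q ∈ Q, r q ∈ R ∧ dist q (r q) ≤ ε' * 2 ^ (i + 1))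
    (hsurj : ∀ s ∈ R, ∃ q ∈ Q, r q = s)
    (xhat aε : M)
    (hmin : R.sup' hR (fun s => dist xhat s) ≤ R.sup' hR (fun s => dist aε s))
    (haε : dist a aε ≤ ε' * 2 ^ (i + 1)) :
    Q.sup' hQ (fun q => dist xhat q)
        ≤ Q.sup' hQ (fun q => dist a q) + 3 * ε' * 2 ^ (i + 1) ∧
      Q.sup' hQ (fun q => dist a q) + 3 * ε' * 2 ^ (i + 1)
        ≤ (1 + 24 * ε') * Q.sup' hQ (fun q => dist a q) := by
  set OPT := Q.sup' hQ (fun q => dist a q) with hOPT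
  have hE : (0:ℝ) < ε' * 2 ^ (i + 1) := by positivity
  -- sup over R of dist aε is bounded
  have hRsup : R.sup' hR (fun s => dist aε s) ≤ OPT + 2 * (ε' * 2 ^ (i + 1)) := by
    apply Finset.sup'_le
    intro s hs
    obtain ⟨q, hq, rfl⟩ := hsurj s hs
    have h1 : dist a q ≤ OPT := Finset.le_sup' (fun q => dist a q) hq
    have h2 := (hrep q hq).2
    calc dist aε (r q) ≤ dist aε a + dist a q + dist q (r q) := dist_triangle4 _ _ _ _
      _ ≤ ε' * 2 ^ (i + 1) + OPT + ε' * 2 ^ (i + 1) := by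
          have := dist_comm a aε ▸ haε
          gcongr
      _ = OPT + 2 * (ε' * 2 ^ (i + 1)) := by ring
  constructor
  · apply Finset.sup'_le
    intro q hq
    obtain ⟨hrq, h2⟩ := hrep q hq
    have h3 : dist xhat (r q) ≤ R.sup' hR (fun s => dist xhat s) :=
      Finset.le_sup' _ hrq
    calc dist xhat q ≤ dist xhat (r q) + dist (r q) q := dist_triangle _ _ _
      _ ≤ OPT + 2 * (ε' * 2 ^ (i + 1)) + ε' * 2 ^ (i + 1) := by
          have h4 := dist_comm q (r q) ▸ h2
          have := h3.trans (hmin.trans hRsup)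
          gcongr
      _ = OPT + 3 * ε' * 2 ^ (i + 1) := by ring
  · have h2i : (2:ℝ) ^ (i+1) = 2 * 2 ^ i := by
      rw [zpow_add₀ (by norm_num : (2:ℝ) ≠ 0)]; ring
    have : 3 * ε' * 2 ^ (i + 1) ≤ 24 * ε' * OPT := by
      rw [h2i]
      calc 3 * ε' * (2 * 2 ^ i) = 6 * ε' * 2 ^ i := by ring
        _ ≤ 6 * ε' * (4 * OPT) := by gcongr
        _ = 24 * ε' * OPT := by ring
    linarith
end

section
/- Let (M,d) be a finite metric space, Q ⊆ M nonempty finite, and A ⊆ M with |A| = p an optimal p-center set with value OPT = max_{q∈Q} d(q,A), where 2^i ≤ 4·OPT for an integer i. Let ε' > 0 and R a finite set such that each q ∈ Q has r(q) ∈ R with d(q,r(q)) ≤ ε'·2^{i+1}, and each r ∈ R equals r(q) for some q ∈ Q. Let A_{ε'} be a set containing for each a ∈ A a point a_{ε'} with d(a, a_{ε'}) ≤ ε'·2^{i+1}. If X̂ ⊆ M satisfies max_{r∈R} d(r, X̂) ≤ max_{r∈R} d(r, A_{ε'}), then max_{q∈Q} d(q, X̂) ≤ OPT + 3·ε'·2^{i+1}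 ≤ (1 + 24·ε')·OPT. -/
/-- (1+ε)-approximation guarantee for the accelerated p-center refinement. -/
theorem p_center_refinement {M : Type*} [MetricSpace M]
    (Q : Finset M) (hQ : Q.Nonempty) (p : ℕ)
    (A : Finset M) (hA : A.Nonempty) (hAcard : A.card = p)
    (hopt : ∀ A' : Finset M, A'.card = p → (hA' : A'.Nonempty) →
      Q.sup' hQ (fun q => A.inf' hA (fun s => dist q s))
        ≤ Q.sup' hQ (fun q => A'.inf' hA' (fun s => dist q s)))
    (i : ℤ)
    (hi : (2 : ℝ) ^ i
      ≤ 4 * Q.sup' hQ (fun q => A.inf' hA (fun s => dist q s)))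
    (ε' : ℝ) (hε' : 0 < ε')
    (R : Finset M) (hR : R.Nonempty) (r : M → M)
    (hrep : ∀ q ∈ Q, r q ∈ R ∧ dist q (r q) ≤ ε' * 2 ^ (i + 1))
    (hsurj : ∀ s ∈ R, ∃ q ∈ Q, r q = s)
    (Aε : Finset M) (hAε : Aε.Nonempty)
    (hAεnear : ∀ a ∈ A, ∃ aε ∈ Aε, dist a aε ≤ ε' * 2 ^ (i + 1))
    (X : Finset M) (hX : X.Nonempty)
    (hmin : R.sup' hR (fun s => X.inf' hX (fun x => dist s x))
      ≤ R.sup' hR (fun s => Aε.inf' hAε (fun x => dist s x))) :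
    Q.sup' hQ (fun q => X.inf' hX (fun x => dist q x))
        ≤ Q.sup' hQ (fun q => A.inf' hA (fun s => dist q s))
            + 3 * ε' * 2 ^ (i + 1) ∧
      Q.sup' hQ (fun q => A.inf' hA (fun s => dist q s)) + 3 * ε' * 2 ^ (i + 1)
        ≤ (1 + 24 * ε')
            * Q.sup' hQ (fun q => A.inf' hA (fun s => dist q s)) := by
  set OPT := Q.sup' hQ (fun q => A.inf' hA (fun s => dist q s)) with hOPT
  set B := ε' * 2 ^ (i + 1) with hB
  -- Claim 1 : every r ∈ R is within OPT + 2B of Aε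
  have claim1 : ∀ s ∈ R, Aε.inf' hAε (fun x => dist s x) ≤ OPT + 2 * B := by
    intro s hs
    obtain ⟨q, hq, hrq⟩ := hsurj s hs
    obtain ⟨a, ha, haeq⟩ := Finset.exists_mem_eq_inf' hA (fun s => dist q s)
    have hqa : dist q a ≤ OPT := by
      rw [← haeq]
      exact Finset.le_sup' (fun q => A.inf' hA (fun s => dist q s)) hq
    obtain ⟨aε, haε, haεd⟩ := hAεnear a ha
    have h1 : Aε.inf' hAε (fun x => dist s x) ≤ dist s aε :=
      Finset.inf'_le _ haε
    have h2 : dist s aε ≤ dist s q + dist q a + dist a aε :=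
      (dist_triangle4 s q a aε)
    have h3 : dist s q ≤ B := by
      rw [← hrq, dist_comm]
      exact (hrep q hq).2
    linarith
  have hsupR : R.sup' hR (fun s => Aε.inf' hAε (fun x => dist s x)) ≤ OPT + 2 * B :=
    Finset.sup'_le _ _ claim1
  -- Claim 2 : every q ∈ Q is within OPT + 3B of X
  have claim2 : ∀ q ∈ Q, X.inf' hX (fun x => dist q x) ≤ OPT + 3 * B := by
    intro q hq
    obtain ⟨hrq, hdq⟩ := hrep q hq
    obtain ⟨x, hx, hxeq⟩ := Finset.exists_mem_eq_inf' hX (fun x => dist (r q) x)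
    have h1 : X.inf' hX (fun x => dist q x) ≤ dist q x := Finset.inf'_le _ hx
    have h2 : dist q x ≤ dist q (r q) + dist (r q) x := dist_triangle _ _ _
    have h3 : dist (r q) x ≤ OPT + 2 * B := by
      rw [← hxeq]
      have h4 := Finset.le_sup' (fun s => X.inf' hX (fun x => dist s x)) hrq
      exact le_trans h4 (le_trans hmin hsupR)
    linarith
  have hOPTnn : 0 ≤ OPT := by
    obtain ⟨q, hq⟩ := hQ
    obtain ⟨a, ha, haeq⟩ := Finset.exists_mem_eq_inf' hA (fun s => dist q s)
    have h0 : (0:ℝ) ≤ A.inf' hA (fun s => dist q s) := haeq ▸ dist_nonneg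
    exact le_trans h0 (Finset.le_sup' (fun q => A.inf' hA (fun s => dist q s)) hq)
  have hBpos : 0 < B := by positivity
  have hBdef : B = ε' * 2 ^ (i + 1) := rfl
  constructor
  · refine Finset.sup'_le _ _ (fun q hq => ?_)
    have := claim2 q hq
    rw [hBdef] at this
    linarith
  · have h2i : (2:ℝ) ^ (i+1) = 2 * 2 ^ i := by
      rw [zpow_add₀ (by norm_num : (2:ℝ) ≠ 0)]; ring
    have h5 : 3 * ε' * 2 ^ (i + 1) ≤ 24 * ε' * OPT := by
      rw [h2i]; nlinarith
    nlinarith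
end

section
/- Let Q be a finite set in a metric space (M,d), p ≥ 1, and let B ⊆ Q be produced by Gonzalez's greedy farthest-point algorithm: B = {b₁,...,b_p} where b₁ ∈ Q is arbitrary and b_{j+1} is a point of Q maximizing d(q, {b₁,...,b_j}). Then max_{q∈Q} d(q, B) ≤ 2·min_{A⊆M, |A|=p} max_{q∈Q} d(q, A). -/
/-- Gonzalez's greedy farthest-point algorithm gives a 2-approximation for
p-center with centers allowed from the ambient metric space. -/
theorem gonzalez_two_approx {M : Type*} [MetricSpace M] [DecidableEq M]
    (Q : Finset M) (hQ : Q.Nonempty) (p : ℕ) (hp : 1 ≤ p)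
    (b : ℕ → M) (hb : ∀ j < p, b j ∈ Q)
    (hgreedy : ∀ j, 1 ≤ j → j < p → ∀ q ∈ Q,
      Metric.infDist q (((Finset.range j).image b : Finset M) : Set M)
        ≤ Metric.infDist (b j) (((Finset.range j).image b : Finset M) : Set M)) :
    ∀ A : Finset M, A.card = p →
      Q.sup' hQ (fun q =>
          Metric.infDist q (((Finset.range p).image b : Finset M) : Set M))
        ≤ 2 * Q.sup' hQ (fun q => Metric.infDist q (A : Set M)) := by
  intro A hA
  set r := Q.sup' hQ (fun q => Metric.infDist q (A : Set M)) with hr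
  have hAne : (A : Set M).Nonempty := by
    rw [Finset.coe_nonempty, ← Finset.card_pos, hA]; omega
  -- each point of Q has a point of A within distance r
  have hnear : ∀ q ∈ Q, ∃ a ∈ A, dist q a ≤ r := by
    intro q hq
    obtain ⟨a, ha, hda⟩ := (A.finite_toSet.isCompact).exists_infDist_eq_dist hAne q
    exact ⟨a, ha, by rw [← hda]; exact Finset.le_sup' (fun q => Metric.infDist q (A : Set M)) hq⟩
  apply Finset.sup'_le
  intro q hq
  -- map the p+1 points b 0,...,b (p-1), q to nearby centers in A
  set f : Fin (p + 1) → M := fun k => if h : (k : ℕ) < p then b k else q with hf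
  have hfQ : ∀ k, f k ∈ Q := by
    intro k; by_cases h : (k : ℕ) < p
    · simp only [hf, dif_pos h]; exact hb _ h
    · simp only [hf, dif_neg h]; exact hq
  choose g hgA hgd using fun k => hnear (f k) (hfQ k)
  have hcard : Fintype.card A < Fintype.card (Fin (p + 1)) := by
    simp [Fintype.card_coe, hA]
  obtain ⟨k, l, hkl, hgkl⟩ :=
    Fintype.exists_ne_map_eq_of_card_lt (fun k : Fin (p + 1) => (⟨g k, hgA k⟩ : A)) hcard
  have hgeq : g k = g l := congrArg Subtype.val hgkl
  have hdist : dist (f k) (f l) ≤ 2 * r := by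
    calc dist (f k) (f l) ≤ dist (f k) (g k) + dist (g k) (f l) := dist_triangle _ _ _
    _ ≤ r + r := add_le_add (hgd k) (by rw [hgeq, dist_comm]; exact hgd l)
    _ = 2 * r := by ring
  have key : ∀ k l : Fin (p + 1), (k : ℕ) < (l : ℕ) → dist (f k) (f l) ≤ 2 * r →
      Metric.infDist q (((Finset.range p).image b : Finset M) : Set M) ≤ 2 * r := by
    intro k l hkl hd
    have hk : (k : ℕ) < p := by omega
    have hfk : f k = b k := dif_pos hk
    by_cases hl : (l : ℕ) < p
    · -- two greedy points in the same cluster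
      have hfl : f l = b l := dif_pos hl
      have h1 : Metric.infDist q (((Finset.range p).image b : Finset M) : Set M)
          ≤ Metric.infDist q (((Finset.range (l : ℕ)).image b : Finset M) : Set M) := by
        apply Metric.infDist_le_infDist_of_subset
        · exact_mod_cast Finset.coe_subset.mpr
            (Finset.image_subset_image (Finset.range_subset_range.mpr hl.le))
        · exact ⟨b k, by simp; exact ⟨k, hkl, rfl⟩⟩
      have h2 := hgreedy l (by omega) hl q hq
      have h3 : Metric.infDist (b (l : ℕ))
          (((Finset.range (l : ℕ)).image b : Finset M) : Set M) ≤ dist (b l) (b k) :=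
        Metric.infDist_le_dist_of_mem (by simp; exact ⟨k, hkl, rfl⟩)
      calc _ ≤ _ := h1
        _ ≤ _ := h2
        _ ≤ dist (b l) (b k) := h3
        _ = dist (f k) (f l) := by rw [hfk, hfl, dist_comm]
        _ ≤ 2 * r := hd
    · -- f l = q, so q is close to some b k
      have hfl : f l = q := dif_neg hl
      have : Metric.infDist q (((Finset.range p).image b : Finset M) : Set M)
          ≤ dist q (b k) :=
        Metric.infDist_le_dist_of_mem (by simp; exact ⟨k, hk, rfl⟩)
      calc _ ≤ dist q (b k) := this
        _ = dist (f k) (f l) := by rw [hfk, hfl, dist_comm]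
        _ ≤ 2 * r := hd
  rcases lt_or_gt_of_ne (fun h => hkl (by exact h)) with h | h
  · exact key k l (by exact_mod_cast h) hdist
  · exact key l k (by exact_mod_cast h) (by rwa [dist_comm])
end
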